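/- Let H be a d×d complex Hermitian matrix with 0 ⪯ H ⪯ I whose smallest eigenvalue is g, such that H has an eigenvalue strictly greater than g, and let δ > 0 be the difference between the second smallest distinct eigenvalue of H and g. Let Π_g be the orthogonal (spectral) projector onto the eigenspace of H for the eigenvalue g, and let σ be a d×d density matrix with σ_g = tr(Π_g σ) > 0. Then for every constant c ∈ (0, 1) there exist η > 0 and a positive integer T such that, setting β = ηT, γ = η²T, and σ(β) = e^{−βH} σ e^{−βH}, for all real numbers c₁, c₂ with |c₁| ≤ 4 and |c₂| ≤ 4 one has tr(σ(β)) + c₁γ > 0 and (tr(H σ(β)) + c₂γ) / (tr(σ(β)) + c₁γ) ≤ g + c. -/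

import Mathlib

open Matrix
open scoped ComplexOrder

/-- The matrix exponential of a complex square matrix. -/
noncomputable def mexp {d : ℕ} (A : Matrix (Fin d) (Fin d) ℂ) : Matrix (Fin d) (Fin d) ℂ :=
  NormedSpace.exp A

/-- The spectral projector of a Hermitian matrix onto the span of its eigenvectors
with eigenvalue at most `E`. -/
noncomputable def spectralProj {d : ℕ} {H : Matrix (Fin d) (Fin d) ℂ}
    (hH : H.IsHermitian) (E : ℝ) : Matrix (Fin d) (Fin d) ℂ :=
  (hH.eigenvectorUnitary : Matrix (Fin d) (Fin d) ℂ) *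
    Matrix.diagonal (fun i => if hH.eigenvalues i ≤ E then (1 : ℂ) else 0) *
    star (hH.eigenvectorUnitary : Matrix (Fin d) (Fin d) ℂ)

lemma mexp_herm {d : ℕ} {H : Matrix (Fin d) (Fin d) ℂ} (hH : H.IsHermitian) (b : ℝ) :
    mexp (-(b : ℂ) • H) = (hH.eigenvectorUnitary : Matrix (Fin d) (Fin d) ℂ) *
      diagonal (fun i => ((Real.exp (-(b * hH.eigenvalues i)) : ℝ) : ℂ)) *
      star (hH.eigenvectorUnitary : Matrix (Fin d) (Fin d) ℂ) := by
  set U : Matrix (Fin d) (Fin d) ℂ := (hH.eigenvectorUnitary : Matrix (Fin d) (Fin d) ℂ)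
  have hU1 : star U * U = 1 := Unitary.star_mul_self_of_mem hH.eigenvectorUnitary.2
  have hU2 : U * star U = 1 := Unitary.mul_star_self_of_mem hH.eigenvectorUnitary.2
  have hUu : IsUnit U := ⟨⟨U, star U, hU2, hU1⟩, rfl⟩
  have hUinv : U⁻¹ = star U := inv_eq_left_inv hU1
  have hspec : H = U * diagonal (fun i => ((hH.eigenvalues i : ℝ) : ℂ)) * star U := by
    have := hH.spectral_theorem; rw [Unitary.conjStarAlgAut_apply] at this; exact this
  have hfun : (-(b : ℂ)) • (fun i => ((hH.eigenvalues i : ℝ) : ℂ))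
      = fun i => ((-(b * hH.eigenvalues i) : ℝ) : ℂ) := by
    funext i
    simp only [Pi.smul_apply, smul_eq_mul]
    push_cast
    ring
  have hfun2 : (NormedSpace.exp (fun i => ((-(b * hH.eigenvalues i) : ℝ) : ℂ)) : Fin d → ℂ)
      = fun i => ((Real.exp (-(b * hH.eigenvalues i)) : ℝ) : ℂ) := by
    funext i
    rw [Pi.exp_def, ← Complex.exp_eq_exp_ℂ]
    exact (Complex.ofReal_exp _).symm
  have h1 : -(b : ℂ) • H = U * diagonal (fun i => ((-(b * hH.eigenvalues i) : ℝ) : ℂ)) * star U := by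
    conv_lhs => rw [hspec]
    rw [← smul_mul_assoc, ← mul_smul_comm, ← diagonal_smul, hfun]
  rw [mexp, h1, ← hUinv, Matrix.exp_conj U _ hUu, Matrix.exp_diagonal, hfun2, hUinv]

lemma psd_diag_nonneg {d : ℕ} {M : Matrix (Fin d) (Fin d) ℂ} (hM : M.PosSemidef) (i : Fin d) :
    0 ≤ M i i := by
  exact hM.diag_nonneg

lemma qal_core {d : ℕ} (lam s : Fin d → ℝ) (g δ c σg : ℝ)
    (hδ : 0 < δ) (hc : 0 < c) (hc1 : c < 1)
    (hs0 : ∀ i, 0 ≤ s i) (hsum : ∑ i, s i = 1)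
    (hg0 : 0 ≤ g) (hg1 : g ≤ 1) (hlg : ∀ i, g ≤ lam i) (hl1 : ∀ i, lam i ≤ 1)
    (hgap : ∀ i, lam i ≠ g → g + δ ≤ lam i)
    (hσg : σg = ∑ i, if lam i ≤ g then s i else 0) (hσgpos : 0 < σg) :
    ∃ β ε : ℝ, 1 ≤ β ∧ 0 < ε ∧ ∀ γ c₁ c₂ : ℝ, 0 ≤ γ → γ ≤ ε → |c₁| ≤ 4 → |c₂| ≤ 4 →
      0 < (∑ i, Real.exp (-(2 * β * lam i)) * s i) + c₁ * γ ∧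
      (∑ i, lam i * Real.exp (-(2 * β * lam i)) * s i) + c₂ * γ ≤
        (g + c) * ((∑ i, Real.exp (-(2 * β * lam i)) * s i) + c₁ * γ) := by
  set β : ℝ := max 1 (Real.log (2 / (c * σg)) / (2 * δ)) with hβ
  have hβ1 : 1 ≤ β := le_max_left _ _
  have hβ0 : 0 < β := lt_of_lt_of_le one_pos hβ1
  have hcσ : 0 < c * σg := mul_pos hc hσgpos
  set X : ℝ := Real.exp (-(2 * β * g)) with hX
  have hX0 : 0 < X := Real.exp_pos _
  have hkey : Real.exp (-(2 * β * δ)) ≤ c * σg / 2 := by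
    have h1 : Real.log (2 / (c * σg)) ≤ 2 * β * δ := by
      have h2 : Real.log (2 / (c * σg)) / (2 * δ) ≤ β := le_max_right _ _
      have h3 : 0 < 2 * δ := by linarith
      calc Real.log (2 / (c * σg)) = Real.log (2 / (c * σg)) / (2 * δ) * (2 * δ) := by
            field_simp
        _ ≤ β * (2 * δ) := by nlinarith
        _ = 2 * β * δ := by ring
    calc Real.exp (-(2 * β * δ)) ≤ Real.exp (-(Real.log (2 / (c * σg)))) := by
          apply Real.exp_le_exp.mpr; linarith
      _ = (2 / (c * σg))⁻¹ := by rw [Real.exp_neg, Real.exp_log (by positivity)]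
      _ = c * σg / 2 := by field_simp
  refine ⟨β, c * σg * X / 24, hβ1, by positivity, ?_⟩
  intro γ c₁ c₂ hγ0 hγε hc₁ hc₂
  set ε : ℝ := c * σg * X / 24 with hε
  obtain ⟨A, hA⟩ : ∃ x, (∑ i, Real.exp (-(2 * β * lam i)) * s i) = x := ⟨_, rfl⟩
  obtain ⟨B, hB⟩ : ∃ x, (∑ i, lam i * Real.exp (-(2 * β * lam i)) * s i) = x := ⟨_, rfl⟩
  rw [hA, hB]
  have hAlb : X * σg ≤ A := by
    rw [hσg, Finset.mul_sum, ← hA]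
    apply Finset.sum_le_sum
    intro i _
    by_cases h : lam i ≤ g
    · have : lam i = g := le_antisymm h (hlg i)
      simp [h, this, hX]
    · simp only [h, if_false, mul_zero]
      exact mul_nonneg (Real.exp_pos _).le (hs0 i)
  have hc1γ : -(4 * ε) ≤ c₁ * γ := by
    have h1 : |c₁ * γ| ≤ 4 * ε := by
      rw [abs_mul, abs_of_nonneg hγ0]
      exact mul_le_mul hc₁ hγε hγ0 (by norm_num)
    linarith [neg_abs_le (c₁ * γ)]
  have hDpos : 0 < A + c₁ * γ := by nlinarith
  refine ⟨hDpos, ?_⟩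
  have hZ : Real.exp (-(2 * β * (g + δ))) ≤ X * (c * σg / 2) := by
    have : Real.exp (-(2 * β * (g + δ))) = X * Real.exp (-(2 * β * δ)) := by
      rw [hX, ← Real.exp_add]; ring_nf
    rw [this]
    exact mul_le_mul_of_nonneg_left hkey hX0.le
  have hmain : B - (g + c) * A ≤ -(c * X * σg) + Real.exp (-(2 * β * (g + δ))) := by
    have hBA : B - (g + c) * A = ∑ i, (lam i - (g + c)) * Real.exp (-(2 * β * lam i)) * s i := by
      rw [← hB, ← hA, Finset.mul_sum, ← Finset.sum_sub_distrib]
      congr 1; funext i; ring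
    have hterm : ∀ i ∈ Finset.univ, (lam i - (g + c)) * Real.exp (-(2 * β * lam i)) * s i ≤
        (if lam i ≤ g then -c * (X * s i) else Real.exp (-(2 * β * (g + δ))) * s i) := by
      intro i _
      by_cases h : lam i ≤ g
      · have hig : lam i = g := le_antisymm h (hlg i)
        rw [if_pos h, hig, hX]
        apply le_of_eq
        ring
      · simp only [h, if_false]
        have hge : g + δ ≤ lam i := hgap i (fun he => h (le_of_eq he))
        have hEle : Real.exp (-(2 * β * lam i)) ≤ Real.exp (-(2 * β * (g + δ))) := by
          apply Real.exp_le_exp.mpr; nlinarith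
        rcases le_or_gt (lam i - (g + c)) 0 with hle | hlt
        · have : (lam i - (g + c)) * Real.exp (-(2 * β * lam i)) * s i ≤ 0 := by
            apply mul_nonpos_of_nonpos_of_nonneg _ (hs0 i)
            exact mul_nonpos_of_nonpos_of_nonneg hle (Real.exp_pos _).le
          have h2 : 0 ≤ Real.exp (-(2 * β * (g + δ))) * s i :=
            mul_nonneg (Real.exp_pos _).le (hs0 i)
          linarith
        · have h1 : lam i - (g + c) ≤ 1 := by nlinarith [hl1 i]
          calc (lam i - (g + c)) * Real.exp (-(2 * β * lam i)) * s i
              ≤ 1 * Real.exp (-(2 * β * (g + δ))) * s i := by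
                apply mul_le_mul _ le_rfl (hs0 i) (by positivity)
                exact mul_le_mul h1 hEle (Real.exp_pos _).le (by linarith)
            _ = Real.exp (-(2 * β * (g + δ))) * s i := by ring
    have hsplit : ∑ i, (if lam i ≤ g then -c * (X * s i) else Real.exp (-(2 * β * (g + δ))) * s i)
        ≤ -(c * X * σg) + Real.exp (-(2 * β * (g + δ))) := by
      have h1 : ∀ i, (if lam i ≤ g then -c * (X * s i) else Real.exp (-(2 * β * (g + δ))) * s i)
          = (-(c * X)) * (if lam i ≤ g then s i else 0)
            + Real.exp (-(2 * β * (g + δ))) * (if lam i ≤ g then 0 else s i) := by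
        intro i; split <;> ring
      simp only [h1]
      rw [Finset.sum_add_distrib, ← Finset.mul_sum, ← Finset.mul_sum, ← hσg]
      have h2 : ∑ i, (if lam i ≤ g then 0 else s i) ≤ 1 := by
        rw [← hsum]
        apply Finset.sum_le_sum
        intro i _
        split
        · exact hs0 i
        · exact le_rfl
      have h3 : Real.exp (-(2 * β * (g + δ))) * (∑ i, if lam i ≤ g then 0 else s i)
          ≤ Real.exp (-(2 * β * (g + δ))) * 1 :=
        mul_le_mul_of_nonneg_left h2 (Real.exp_pos _).le
      have h4 : (-(c * X)) * σg = -(c * X * σg) := by ring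
      linarith
    calc B - (g + c) * A = ∑ i, (lam i - (g + c)) * Real.exp (-(2 * β * lam i)) * s i := hBA
      _ ≤ _ := Finset.sum_le_sum hterm
      _ ≤ _ := hsplit
  have hc2γ : (c₂ - (g + c) * c₁) * γ ≤ 12 * ε := by
    have h1 : |c₂ - (g + c) * c₁| ≤ 12 := by
      have h2 : |(g + c) * c₁| ≤ 2 * 4 := by
        rw [abs_mul]
        apply mul_le_mul _ hc₁ (abs_nonneg _) (by norm_num)
        rw [abs_of_nonneg (by linarith)]; linarith
      calc |c₂ - (g + c) * c₁| ≤ |c₂| + |(g + c) * c₁| := abs_sub _ _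
        _ ≤ 4 + 8 := by linarith
        _ = 12 := by norm_num
    calc (c₂ - (g + c) * c₁) * γ ≤ |(c₂ - (g + c) * c₁) * γ| := le_abs_self _
      _ = |c₂ - (g + c) * c₁| * γ := by rw [abs_mul, abs_of_nonneg hγ0]
      _ ≤ 12 * γ := mul_le_mul_of_nonneg_right h1 hγ0
      _ ≤ 12 * ε := by linarith
  nlinarith [hmain, hZ, hc2γ]

theorem qal_convergence_to_global_minimum {d : ℕ} (H : Matrix (Fin d) (Fin d) ℂ)
    (hH : H.IsHermitian) (hH0 : H.PosSemidef) (hH1 : (1 - H).PosSemidef)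
    (g : ℝ) (hg : IsLeast (Set.range hH.eigenvalues) g)
    (δ : ℝ) (hδ : 0 < δ)
    (hgap : IsLeast {x | x ∈ Set.range hH.eigenvalues ∧ g < x} (g + δ))
    (σ : Matrix (Fin d) (Fin d) ℂ) (hσ : σ.PosSemidef) (hσtr : σ.trace = 1)
    (hσg : 0 < (spectralProj hH g * σ).trace.re)
    (c : ℝ) (hc : c ∈ Set.Ioo (0 : ℝ) 1) :
    ∃ (η : ℝ) (T : ℕ), 0 < η ∧ 1 ≤ T ∧
      ∀ c₁ c₂ : ℝ, |c₁| ≤ 4 → |c₂| ≤ 4 →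
        0 < (mexp (-(((η * T : ℝ)) : ℂ) • H) * σ * mexp (-(((η * T : ℝ)) : ℂ) • H)).trace.re
              + c₁ * (η ^ 2 * T) ∧
        ((H * (mexp (-(((η * T : ℝ)) : ℂ) • H) * σ * mexp (-(((η * T : ℝ)) : ℂ) • H))).trace.re
              + c₂ * (η ^ 2 * T)) /
          ((mexp (-(((η * T : ℝ)) : ℂ) • H) * σ * mexp (-(((η * T : ℝ)) : ℂ) • H)).trace.re
              + c₁ * (η ^ 2 * T)) ≤ g + c := by
  obtain ⟨hc0, hc1⟩ := hc
  set U : Matrix (Fin d) (Fin d) ℂ := (hH.eigenvectorUnitary : Matrix (Fin d) (Fin d) ℂ) with hUdef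
  set lam : Fin d → ℝ := hH.eigenvalues with hlam
  have hU1 : star U * U = 1 := Unitary.star_mul_self_of_mem hH.eigenvectorUnitary.2
  have hU2 : U * star U = 1 := Unitary.mul_star_self_of_mem hH.eigenvectorUnitary.2
  have hspec : H = U * diagonal (fun i => ((lam i : ℝ) : ℂ)) * star U := by
    have := hH.spectral_theorem; rw [Unitary.conjStarAlgAut_apply] at this; exact this
  set σ' : Matrix (Fin d) (Fin d) ℂ := star U * σ * U with hσ'def
  have hσ' : σ'.PosSemidef := by
    rw [hσ'def, Matrix.star_eq_conjTranspose]
    exact hσ.conjTranspose_mul_mul_same U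
  set s : Fin d → ℝ := fun i => (σ' i i).re with hsdef
  have hdiag : ∀ i, σ' i i = ((s i : ℝ) : ℂ) := by
    intro i
    have h := psd_diag_nonneg hσ' i
    have him := (Complex.le_def.mp h).2
    apply Complex.ext
    · simp [hsdef]
    · simp [hsdef, ← him]
  have hs0 : ∀ i, 0 ≤ s i := by
    intro i
    have h := psd_diag_nonneg hσ' i
    exact (Complex.le_def.mp h).1
  -- trace of σ' is 1
  have htrσ' : σ'.trace = 1 := by
    rw [hσ'def, Matrix.trace_mul_comm, ← mul_assoc, hU2, one_mul, hσtr]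
  have hsum : ∑ i, s i = 1 := by
    have h : σ'.trace = ((∑ i, s i : ℝ) : ℂ) := by
      rw [Matrix.trace]
      push_cast
      exact Finset.sum_congr rfl fun i _ => hdiag i
    rw [htrσ'] at h
    exact_mod_cast h.symm
  -- eigenvalue facts
  have hlg : ∀ i, g ≤ lam i := fun i => hg.2 ⟨i, rfl⟩
  have hg0 : 0 ≤ g := by
    obtain ⟨i0, hi0⟩ := hg.1
    rw [← hi0]
    exact hH0.eigenvalues_nonneg i0
  -- eigenvalues at most 1
  have hD : star U * H * U = diagonal (fun i => ((lam i : ℝ) : ℂ)) := by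
    conv_lhs => rw [hspec]
    simp only [← mul_assoc]
    rw [hU1, one_mul]
    simp only [mul_assoc]
    rw [hU1, mul_one]
  have h1mH : star U * (1 - H) * U = 1 - diagonal (fun i => ((lam i : ℝ) : ℂ)) := by
    rw [mul_sub, sub_mul, mul_one, hU1, hD]
  have hl1 : ∀ i, lam i ≤ 1 := by
    intro i
    have hpsd : (star U * (1 - H) * U).PosSemidef := by
      rw [Matrix.star_eq_conjTranspose]
      exact hH1.conjTranspose_mul_mul_same U
    have h := psd_diag_nonneg hpsd i
    rw [h1mH] at h
    have h2 : ((1 : Matrix (Fin d) (Fin d) ℂ) - diagonal (fun i => ((lam i : ℝ) : ℂ))) i i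
        = ((1 - lam i : ℝ) : ℂ) := by
      simp [Matrix.one_apply, Matrix.diagonal_apply_eq]
    rw [h2] at h
    have := (Complex.le_def.mp h).1
    simp at this
    linarith
  have hg1 : g ≤ 1 := by
    obtain ⟨i0, hi0⟩ := hg.1
    rw [← hi0]; exact hl1 i0
  have hgap' : ∀ i, lam i ≠ g → g + δ ≤ lam i := by
    intro i hne
    exact hgap.2 ⟨⟨i, rfl⟩, lt_of_le_of_ne (hlg i) (Ne.symm hne)⟩
  -- overlap
  set σgv : ℝ := ∑ i, if lam i ≤ g then s i else 0 with hσgv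
  have hproj : (spectralProj hH g * σ).trace.re = σgv := by
    have h1 : (spectralProj hH g * σ).trace
        = (diagonal (fun i => if lam i ≤ g then (1 : ℂ) else 0) * σ').trace := by
      rw [spectralProj]
      have h : U * diagonal (fun i => if lam i ≤ g then (1 : ℂ) else 0) * star U * σ
          = U * (diagonal (fun i => if lam i ≤ g then (1 : ℂ) else 0) * (star U * σ)) := by
        simp only [mul_assoc]
      rw [h, Matrix.trace_mul_comm]
      congr 1
      rw [hσ'def]
      simp only [mul_assoc]
    rw [h1, Matrix.trace]
    have h2 : ∀ i, ((diagonal (fun i => if lam i ≤ g then (1 : ℂ) else 0) * σ').diag i)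
        = (((if lam i ≤ g then s i else 0 : ℝ)) : ℂ) := by
      intro i
      rw [Matrix.diag, Matrix.diagonal_mul, hdiag i]
      split <;> simp
    rw [Finset.sum_congr rfl fun i _ => h2 i]
    rw [← Complex.ofReal_sum]
    simp [hσgv]
  rw [hproj] at hσg
  -- apply the core lemma
  obtain ⟨β, ε, hβ1, hε0, hcore⟩ := qal_core lam s g δ c σgv hδ hc0 hc1 hs0 hsum hg0 hg1
    hlg hl1 hgap' rfl hσg
  have hβ0 : 0 < β := lt_of_lt_of_le one_pos hβ1
  -- choose T and η
  set T : ℕ := Nat.ceil (β ^ 2 / ε) + 1 with hT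
  have hT1 : 1 ≤ T := Nat.le_add_left 1 _
  have hT0 : 0 < (T : ℝ) := by positivity
  set η : ℝ := β / T with hη
  have hη0 : 0 < η := div_pos hβ0 hT0
  have hηT : η * (T : ℝ) = β := by
    rw [hη]; field_simp
  have hγval : η ^ 2 * (T : ℝ) = β ^ 2 / T := by
    rw [hη]; field_simp
  have hγ0 : 0 ≤ η ^ 2 * (T : ℝ) := by positivity
  have hγε : η ^ 2 * (T : ℝ) ≤ ε := by
    rw [hγval, div_le_iff₀ hT0]
    calc β ^ 2 = (β ^ 2 / ε) * ε := by field_simp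
      _ ≤ (T : ℝ) * ε := by
          apply mul_le_mul_of_nonneg_right _ hε0.le
          calc (β ^ 2 / ε) ≤ (Nat.ceil (β ^ 2 / ε) : ℝ) := Nat.le_ceil _
            _ ≤ (T : ℝ) := by rw [hT]; push_cast; linarith
      _ = ε * (T : ℝ) := by ring
  refine ⟨η, T, hη0, hT1, ?_⟩
  intro c₁ c₂ hc₁ hc₂
  -- trace computations
  have hconj : mexp (-(((η * T : ℝ)) : ℂ) • H) * σ * mexp (-(((η * T : ℝ)) : ℂ) • H)
      = U * (diagonal (fun i => ((Real.exp (-(β * lam i)) : ℝ) : ℂ)) * σ' *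
          diagonal (fun i => ((Real.exp (-(β * lam i)) : ℝ) : ℂ))) * star U := by
    rw [hηT, mexp_herm hH β, hσ'def]
    simp only [mul_assoc]
    rfl
  have htrconj : ∀ M : Matrix (Fin d) (Fin d) ℂ, (U * M * star U).trace = M.trace := by
    intro M
    rw [mul_assoc, Matrix.trace_mul_comm, mul_assoc, hU1, mul_one]
  have hA : (mexp (-(((η * T : ℝ)) : ℂ) • H) * σ * mexp (-(((η * T : ℝ)) : ℂ) • H)).trace.re
      = ∑ i, Real.exp (-(2 * β * lam i)) * s i := by
    rw [hconj, htrconj, Matrix.trace]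
    have h2 : ∀ i, ((diagonal (fun i => ((Real.exp (-(β * lam i)) : ℝ) : ℂ)) * σ' *
        diagonal (fun i => ((Real.exp (-(β * lam i)) : ℝ) : ℂ))).diag i)
        = ((Real.exp (-(2 * β * lam i)) * s i : ℝ) : ℂ) := by
      intro i
      rw [Matrix.diag, Matrix.mul_diagonal, Matrix.diagonal_mul, hdiag i]
      have h3 : Real.exp (-(2 * β * lam i)) = Real.exp (-(β * lam i)) * Real.exp (-(β * lam i)) := by
        rw [← Real.exp_add]; ring_nf
      rw [h3]
      push_cast
      ring
    rw [Finset.sum_congr rfl fun i _ => h2 i, ← Complex.ofReal_sum]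
    exact Complex.ofReal_re _
  have hB : (H * (mexp (-(((η * T : ℝ)) : ℂ) • H) * σ * mexp (-(((η * T : ℝ)) : ℂ) • H))).trace.re
      = ∑ i, lam i * Real.exp (-(2 * β * lam i)) * s i := by
    rw [hconj]
    have h0 : H * (U * (diagonal (fun i => ((Real.exp (-(β * lam i)) : ℝ) : ℂ)) * σ' *
          diagonal (fun i => ((Real.exp (-(β * lam i)) : ℝ) : ℂ))) * star U)
        = U * (diagonal (fun i => ((lam i : ℝ) : ℂ)) *
            (diagonal (fun i => ((Real.exp (-(β * lam i)) : ℝ) : ℂ)) * σ' *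
              diagonal (fun i => ((Real.exp (-(β * lam i)) : ℝ) : ℂ)))) * star U := by
      conv_lhs => rw [hspec]
      simp only [mul_assoc]
      rw [← mul_assoc (star U) U, hU1, one_mul]
    rw [h0, htrconj, Matrix.trace]
    have h2 : ∀ i, ((diagonal (fun i => ((lam i : ℝ) : ℂ)) *
        (diagonal (fun i => ((Real.exp (-(β * lam i)) : ℝ) : ℂ)) * σ' *
          diagonal (fun i => ((Real.exp (-(β * lam i)) : ℝ) : ℂ)))).diag i)
        = ((lam i * Real.exp (-(2 * β * lam i)) * s i : ℝ) : ℂ) := by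
      intro i
      rw [Matrix.diag, Matrix.diagonal_mul, Matrix.mul_diagonal, Matrix.diagonal_mul, hdiag i]
      have h3 : Real.exp (-(2 * β * lam i)) = Real.exp (-(β * lam i)) * Real.exp (-(β * lam i)) := by
        rw [← Real.exp_add]; ring_nf
      rw [h3]
      push_cast
      ring
    rw [Finset.sum_congr rfl fun i _ => h2 i, ← Complex.ofReal_sum]
    exact Complex.ofReal_re _
  obtain ⟨hpos, hle⟩ := hcore (η ^ 2 * (T : ℝ)) c₁ c₂ hγ0 hγε hc₁ hc₂
  rw [hA, hB]
  refine ⟨hpos, ?_⟩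
  rw [div_le_iff₀ hpos]
  linarith
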